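/- Let S be a subset of ω₁ such that cl(S) \ S is unbounded in ω₁ and S contains a set that is closed in ω₁ and unbounded (a cub set). Then K(S) is Tukey equivalent to Σ(ω^{ω₁}), i.e. K(S) ≥_T Σ(ω^{ω₁}) and Σ(ω^{ω₁}) ≥_T K(S). -/

import Mathlib

open Cardinal Set

universe u v

/-- `C` is cofinal for `P'` in `P`: every element of `P'` lies below some element of `C`. -/
def IsCofinalFor' {P : Type u} [Preorder P] (P' C : Set P) : Prop :=
  ∀ p ∈ P', ∃ c ∈ C, p ≤ c

/-- `φ : P → Q` is a relative Tukey quotient from `(P', P)` to `(Q', Q)`: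
it maps every subset of `P` cofinal for `P'` to a subset of `Q` cofinal for `Q'`. -/
def IsRelTukeyQuotient {P : Type u} {Q : Type v} [Preorder P] [Preorder Q]
    (P' : Set P) (Q' : Set Q) (φ : P → Q) : Prop :=
  ∀ C : Set P, IsCofinalFor' P' C → IsCofinalFor' Q' (φ '' C)

/-- `(P', P) ≥_T (Q', Q)`: there exists a relative Tukey quotient. -/
def RelTukeyGE {P : Type u} {Q : Type v} [Preorder P] [Preorder Q]
    (P' : Set P) (Q' : Set Q) : Prop :=
  ∃ φ : P → Q, IsRelTukeyQuotient P' Q' φ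

/-- `P ≥_T Q`: there is a Tukey quotient from `P` to `Q`. -/
def TukeyGE (P : Type u) (Q : Type v) [Preorder P] [Preorder Q] : Prop :=
  RelTukeyGE (Set.univ : Set P) (Set.univ : Set Q)

/-- `A` is unbounded in `P`: it has no upper bound in `P`. -/
def UnboundedIn {P : Type u} [Preorder P] (A : Set P) : Prop :=
  ¬ ∃ b : P, ∀ a ∈ A, a ≤ b

noncomputable section

/-- `ω₁`: the set of countable ordinals, as the canonical well-order of order type `ω₁`. -/
def O1 : Type := (Cardinal.aleph 1).ord.ToType

noncomputable instance : LinearOrder O1 :=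
  inferInstanceAs (LinearOrder (Cardinal.aleph 1).ord.ToType)

/-- `ω₁` carries its order topology. -/
instance : TopologicalSpace O1 := Preorder.topology O1

instance : OrderTopology O1 := ⟨rfl⟩

/-- `K(S)` for `S ⊆ ω₁`: the compact subsets of `S` (equivalently, compact subsets of `ω₁`
contained in `S`), ordered by inclusion. -/
def KS (S : Set O1) : Type := {K : Set O1 // K ⊆ S ∧ IsCompact K}

instance (S : Set O1) : PartialOrder (KS S) := Subtype.partialOrder _

/-- `A ⊆ ω₁` is bounded in `ω₁`. -/
def BddO1 (A : Set O1) : Prop := ∃ β : O1, ∀ x ∈ A, x ≤ β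

/-- `Σ(ω^{ω₁})`: the functions `f : ω₁ → ℕ` which vanish beyond some countable ordinal,
with the pointwise order. -/
def SigmaOm : Type := {f : O1 → ℕ // ∃ γ : O1, ∀ β : O1, γ < β → f β = 0}

instance : PartialOrder SigmaOm := Subtype.partialOrder _

instance : WellFoundedLT O1 := inferInstanceAs (WellFoundedLT (Cardinal.aleph 1).ord.ToType)
instance : OrderBot O1 := Ordinal.toTypeOrderBot Cardinal.isRegular_aleph_one.ord_pos.ne'
noncomputable instance : ConditionallyCompleteLinearOrderBot O1 :=
  WellFoundedLT.conditionallyCompleteLinearOrderBot O1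
instance : Nonempty O1 := ⟨⊥⟩

lemma countable_Iio (x : O1) : (Set.Iio x).Countable :=
  (Cardinal.countable_iff_lt_aleph_one _).2 (Cardinal.mk_Iio_ord_toType (c := Cardinal.aleph 1) x)

/-- countable sets in O1 are bounded -/
lemma bddO1_of_countable {s : Set O1} (hs : s.Countable) : ∃ b : O1, ∀ x ∈ s, x ≤ b := by
  rcases s.eq_empty_or_nonempty with rfl | hne
  · exact ⟨⊥, by simp⟩
  have hsn : Nonempty s := hne.to_subtype
  have hcs : Countable s := hs.to_subtype
  obtain ⟨f, hf⟩ := exists_surjective_nat s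
  set e := (Ordinal.ToType.mk (o := (Cardinal.aleph 1).ord)) with he
  set o : ℕ → Ordinal := fun n => ((e.symm ((f n : O1) : (Cardinal.aleph 1).ord.ToType)) : Ordinal)
  have ho : ∀ n, o n < (Cardinal.aleph 1).ord := fun n => (e.symm _).2
  have hlt : iSup o < (Cardinal.aleph 1).ord := by
    rw [Cardinal.ord_aleph] at ho ⊢; exact Ordinal.iSup_lt_omega_one ho
  refine ⟨(e ⟨iSup o, hlt⟩ : (Cardinal.aleph 1).ord.ToType), ?_⟩
  intro x hx
  obtain ⟨n, hn⟩ := hf ⟨x, hx⟩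
  have h1 : o n ≤ iSup o := le_ciSup (by
    refine ⟨(Cardinal.aleph 1).ord, ?_⟩
    rintro y ⟨m, rfl⟩
    exact (ho m).le) n
  have : e.symm (x : (Cardinal.aleph 1).ord.ToType) ≤ ⟨iSup o, hlt⟩ := by
    have : o n = ((e.symm (x : (Cardinal.aleph 1).ord.ToType)) : Ordinal) := by
      simp [o, hn]
    rw [← Subtype.coe_le_coe]
    show ((e.symm (x : (Cardinal.aleph 1).ord.ToType)) : Ordinal) ≤ iSup o
    rw [← this]; exact h1
  have := e.monotone this
  exact le_of_eq_of_le (e.apply_symm_apply (x : (Cardinal.aleph 1).ord.ToType)).symm this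

/-- If `z` is in the closure of `A` but not in `A`, then `z` has points below,
and `A` has points in every interval `(y,z)`. -/
lemma closure_char {A : Set O1} {z : O1} (hz : z ∈ closure A) (hzA : z ∉ A) :
    (∃ y, y < z) ∧ ∀ y < z, (A ∩ Set.Ioo y z).Nonempty := by
  have hAne : A.Nonempty := by
    rcases A.eq_empty_or_nonempty with rfl | h
    · simp at hz
    · exact h
  constructor
  · by_contra hmin
    push_neg at hmin
    -- z is minimal
    obtain ⟨a, ha⟩ := hAne
    have haz : z < a := lt_of_le_of_ne (hmin a) (fun h => hzA (h ▸ ha))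
    have hne : (A ∩ Set.Ioi z).Nonempty := ⟨a, ha, haz⟩
    set m := (wellFounded_lt (α := O1)).min _ hne with hm
    have hmmem := (wellFounded_lt (α := O1)).min_mem _ hne
    have hzm : z < m := hmmem.2
    obtain ⟨u, hu1, hu2⟩ := mem_closure_iff.1 hz _ isOpen_Iio hzm
    have huz : z < u := lt_of_le_of_ne (hmin u) (fun h => hzA (h ▸ hu2))
    exact (wellFounded_lt (α := O1)).not_lt_min (A ∩ Set.Ioi z) ⟨hu2, huz⟩ hu1
  · intro y hy
    by_contra hemp
    rw [Set.not_nonempty_iff_eq_empty] at hemp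
    rcases (A ∩ Set.Ioi z).eq_empty_or_nonempty with hne | hne
    · obtain ⟨u, hu1, hu2⟩ := mem_closure_iff.1 hz _ isOpen_Ioi hy
      rcases lt_trichotomy u z with h | h | h
      · have : u ∈ A ∩ Set.Ioo y z := ⟨hu2, hu1, h⟩
        rw [hemp] at this; simp at this
      · exact hzA (h ▸ hu2)
      · have : u ∈ A ∩ Set.Ioi z := ⟨hu2, h⟩; rw [hne] at this; simp at this
    · set m := (wellFounded_lt (α := O1)).min _ hne with hm
      have hmmem := (wellFounded_lt (α := O1)).min_mem _ hne
      have hzm : z < m := hmmem.2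
      have hopen : z ∈ Set.Ioo y m := ⟨hy, hzm⟩
      obtain ⟨u, hu1, hu2⟩ := mem_closure_iff.1 hz _ isOpen_Ioo hopen
      rcases lt_trichotomy u z with h | h | h
      · have : u ∈ A ∩ Set.Ioo y z := ⟨hu2, hu1.1, h⟩
        rw [hemp] at this; simp at this
      · exact hzA (h ▸ hu2)
      · exact (wellFounded_lt (α := O1)).not_lt_min (A ∩ Set.Ioi z) ⟨hu2, h⟩ hu1.2

/-- converse: density from below implies membership in closure. -/
lemma mem_closure_of_dense_below {A : Set O1} {z : O1} (hy : ∃ y, y < z)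
    (hd : ∀ y < z, (A ∩ Set.Ioo y z).Nonempty) : z ∈ closure A := by
  obtain ⟨y0, hy0⟩ := hy
  have hne : (A ∩ Set.Iio z).Nonempty := by
    obtain ⟨a, ha, hao⟩ := hd y0 hy0
    exact ⟨a, ha, hao.2⟩
  have hlub : IsLUB (A ∩ Set.Iio z) z := by
    constructor
    · intro x hx; exact hx.2.le
    · intro b hb
      by_contra hbz
      push_neg at hbz
      obtain ⟨a, ha, hao⟩ := hd b hbz
      exact absurd (hb ⟨ha, hao.2⟩) (not_le.2 hao.1)
  exact closure_mono (Set.inter_subset_left) (hlub.mem_closure hne)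

lemma unbdd {A : Set O1} (hA : ¬ BddO1 A) (y : O1) : (A ∩ Set.Ioi y).Nonempty := by
  rw [BddO1] at hA
  push_neg at hA
  obtain ⟨x, hx, hxy⟩ := hA y
  exact ⟨x, hx, hxy⟩

open Classical in
def nxt (A : Set O1) (y : O1) : O1 :=
  if h : (A ∩ Set.Ioi y).Nonempty then h.choose else ⊥

lemma nxt_spec {A : Set O1} (hA : ¬ BddO1 A) (y : O1) : nxt A y ∈ A ∧ y < nxt A y := by
  rw [nxt]
  rw [dif_pos (unbdd hA y)]
  exact (unbdd hA y).choose_spec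

open Classical in
def ubOf (s : Set O1) : O1 :=
  if h : ∃ b : O1, ∀ x ∈ s, x ≤ b then h.choose else ⊥

lemma ubOf_spec {s : Set O1} (hs : s.Countable) : ∀ x ∈ s, x ≤ ubOf s := by
  rw [ubOf]
  rw [dif_pos (bddO1_of_countable hs)]
  exact (bddO1_of_countable hs).choose_spec

lemma isCompact_of_isClosed_bdd {k : Set O1} (hc : IsClosed k) {b : O1}
    (hb : ∀ x ∈ k, x ≤ b) : IsCompact k :=
  (isCompact_Icc (a := (⊥ : O1)) (b := b)).of_isClosed_subset hc
    (fun x hx => ⟨bot_le, hb x hx⟩)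

lemma le_cSup_CIio {C : Set O1} {z c : O1} (hc : c ∈ C) (hcz : c < z) :
    c ≤ sSup (C ∩ Set.Iio z) :=
  le_csSup ⟨z, fun x hx => hx.2.le⟩ ⟨hc, hcz⟩

/-- the sup of the cub below a point of `cl S \ S` stays strictly below. -/
lemma cb_lt {S C : Set O1} (hCS : C ⊆ S) (hCcl : IsClosed C)
    {z : O1} (hz : z ∈ closure S \ S) : sSup (C ∩ Set.Iio z) < z := by
  obtain ⟨⟨y0, hy0⟩, -⟩ := closure_char hz.1 hz.2
  by_contra hlt
  push_neg at hlt
  rcases (C ∩ Set.Iio z).eq_empty_or_nonempty with he | hne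
  · rw [he, csSup_empty] at hlt
    exact absurd (lt_of_le_of_lt (bot_le (a := y0)) hy0) (not_lt.2 hlt)
  · have heq : sSup (C ∩ Set.Iio z) = z :=
      le_antisymm (csSup_le hne (fun x hx => hx.2.le)) hlt
    have : z ∈ closure C := by
      apply mem_closure_of_dense_below ⟨y0, hy0⟩
      intro y hy
      obtain ⟨c, hc, hyc⟩ := exists_lt_of_lt_csSup hne (heq ▸ hy)
      exact ⟨c, hc.1, hyc, hc.2⟩
    rw [hCcl.closure_eq] at this
    exact hz.2 (hCS this)

/-- ladders: strictly increasing cofinal sequences of `S`-points below `η ∈ cl S \ S`,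
staying above the sup of `C` below `η`. -/
lemma exists_ladder {S C : Set O1} (hCS : C ⊆ S) (hCcl : IsClosed C) {η : O1}
    (hη : η ∈ closure S \ S) :
    ∃ u : ℕ → O1, StrictMono u ∧ (∀ n, u n ∈ S) ∧
      (∀ n, sSup (C ∩ Set.Iio η) < u n) ∧ (∀ n, u n < η) ∧
      ∀ y, y < η → ∃ n, y < u n := by
  have hcb := cb_lt hCS hCcl hη
  have hcc := closure_char hη.1 hη.2
  have key : ∀ y, y < η → (S ∩ Set.Ioo y η).Nonempty := hcc.2
  have hne : (Set.Iio η).Nonempty := hcc.1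
  haveI := (countable_Iio η).to_subtype
  haveI := hne.to_subtype
  obtain ⟨r, hr⟩ := exists_surjective_nat ↥(Set.Iio η)
  have step : ∀ y : O1, y < η →
      {x : {x : O1 // x ∈ S ∧ sSup (C ∩ Set.Iio η) < x ∧ x < η} // y < x.1} := by
    intro y hy
    have h := key (max y (sSup (C ∩ Set.Iio η))) (max_lt hy hcb)
    refine ⟨⟨h.choose, h.choose_spec.1, ?_, h.choose_spec.2.2⟩, ?_⟩
    · exact lt_of_le_of_lt (le_max_right _ _) h.choose_spec.2.1
    · exact lt_of_le_of_lt (le_max_left _ _) h.choose_spec.2.1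
  let u : ℕ → {x : O1 // x ∈ S ∧ sSup (C ∩ Set.Iio η) < x ∧ x < η} := fun n =>
    Nat.rec ((step _ hcb).1)
      (fun n prev => (step (max prev.1 (r n).1) (max_lt prev.2.2.2 (r n).2)).1) n
  have hu : ∀ n, max (u n).1 (r n).1 < (u (n+1)).1 := by
    intro n
    exact (step (max (u n).1 (r n).1) (max_lt (u n).2.2.2 (r n).2)).2
  refine ⟨fun n => (u n).1, strictMono_nat_of_lt_succ (fun n =>
    lt_of_le_of_lt (le_max_left _ _) (hu n)), fun n => (u n).2.1,
    fun n => (u n).2.2.1, fun n => (u n).2.2.2, ?_⟩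
  intro y hy
  obtain ⟨n, hn⟩ := hr ⟨y, hy⟩
  refine ⟨n + 1, ?_⟩
  have := lt_of_le_of_lt (le_max_right (u n).1 (r n).1) (hu n)
  rwa [hn] at this

open Classical in
/-- channel assignment: a strictly increasing `D`-valued function with `C`-separators. -/
def zeta (S C : Set O1) : O1 → O1 :=
  (wellFounded_lt (α := O1)).fix (fun β rec =>
    nxt (closure S \ S) (nxt C (ubOf (insert β (Set.range (fun γ : Set.Iio β => rec γ.1 γ.2))))))

open Classical in
def zetaC (S C : Set O1) (β : O1) : O1 :=
  nxt C (ubOf (insert β (Set.range (fun γ : Set.Iio β => zeta S C γ.1))))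

lemma zeta_eq (S C : Set O1) (β : O1) : zeta S C β = nxt (closure S \ S) (zetaC S C β) := by
  rw [zeta, WellFounded.fix_eq]
  rfl

lemma zeta_props {S C : Set O1} (hC : ¬ BddO1 C) (hD : ¬ BddO1 (closure S \ S)) (β : O1) :
    zetaC S C β ∈ C ∧ β < zetaC S C β ∧ (∀ γ, γ < β → zeta S C γ < zetaC S C β) ∧
      zetaC S C β < zeta S C β ∧ zeta S C β ∈ closure S \ S := by
  haveI := (countable_Iio β).to_subtype
  have hcnt : (insert β (Set.range (fun γ : Set.Iio β => zeta S C γ.1))).Countable :=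
    (Set.countable_range _).insert β
  have hub := ubOf_spec hcnt
  have hc := nxt_spec hC (ubOf (insert β (Set.range (fun γ : Set.Iio β => zeta S C γ.1))))
  have hd := nxt_spec hD (zetaC S C β)
  refine ⟨hc.1, lt_of_le_of_lt (hub β (Set.mem_insert _ _)) hc.2, ?_, ?_, ?_⟩
  · intro γ hγ
    exact lt_of_le_of_lt (hub _ (Set.mem_insert_of_mem _ ⟨⟨γ, hγ⟩, rfl⟩)) hc.2
  · rw [zeta_eq]; exact hd.2
  · rw [zeta_eq]; exact hd.1

lemma zeta_mono {S C : Set O1} (hC : ¬ BddO1 C) (hD : ¬ BddO1 (closure S \ S))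
    {γ β : O1} (h : γ < β) : zeta S C γ < zeta S C β :=
  lt_trans ((zeta_props hC hD β).2.2.1 γ h) (zeta_props hC hD β).2.2.2.1

lemma zeta_cb_gt {S C : Set O1} (hC : ¬ BddO1 C) (hD : ¬ BddO1 (closure S \ S)) (β : O1) :
    β < sSup (C ∩ Set.Iio (zeta S C β)) := by
  have h := zeta_props hC hD β
  exact lt_of_lt_of_le h.2.1 (le_cSup_CIio h.1 h.2.2.2.1)

lemma KS_le_iff {S : Set O1} (K1 K2 : KS S) : K1 ≤ K2 ↔ K1.1 ⊆ K2.1 := Iff.rfl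
lemma Sigma_le_iff (f h : SigmaOm) : f ≤ h ↔ ∀ β, f.1 β ≤ h.1 β := Iff.rfl

/-- Direction 1: a map SigmaOm → KS S under which bounded images pull back to bounded sets. -/
lemma dir1 {S C : Set O1} (hCS : C ⊆ S) (hCcl : IsClosed C) (hC : ¬ BddO1 C)
    (hD : ¬ BddO1 (closure S \ S)) :
    ∃ g : SigmaOm → KS S, ∀ A : Set SigmaOm,
      (∃ p, ∀ a ∈ A, g a ≤ p) → ∃ q, ∀ a ∈ A, a ≤ q := by
  have hWex : ∀ η : O1, ∃ u : ℕ → O1, η ∈ closure S \ S →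
      (StrictMono u ∧ (∀ n, u n ∈ S) ∧ (∀ n, sSup (C ∩ Set.Iio η) < u n) ∧
        (∀ n, u n < η) ∧ ∀ y, y < η → ∃ n, y < u n) := by
    intro η
    by_cases hη : η ∈ closure S \ S
    · obtain ⟨u, hu⟩ := exists_ladder hCS hCcl hη
      exact ⟨u, fun _ => hu⟩
    · exact ⟨fun _ => ⊥, fun h => absurd h hη⟩
  choose W hW using hWex
  -- the sets T f
  set T : SigmaOm → Set O1 := fun f =>
    (fun β => W (zeta S C β) (f.1 β)) '' {β | f.1 β ≠ 0} with hT
  have hzD : ∀ β, zeta S C β ∈ closure S \ S := fun β => (zeta_props hC hD β).2.2.2.2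
  have hWlt : ∀ β n, W (zeta S C β) n < zeta S C β := fun β n => (hW _ (hzD β)).2.2.2.1 n
  have hWgt : ∀ β n, sSup (C ∩ Set.Iio (zeta S C β)) < W (zeta S C β) n :=
    fun β n => (hW _ (hzD β)).2.2.1 n
  have hWS : ∀ β n, W (zeta S C β) n ∈ S := fun β n => (hW _ (hzD β)).2.1 n
  -- bound for T f
  have hTbd : ∀ f : SigmaOm, ∀ x ∈ T f, x ≤ zeta S C f.2.choose := by
    rintro f x ⟨β, hβ, rfl⟩
    have hβle : β ≤ f.2.choose := by
      by_contra hgt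
      exact hβ (f.2.choose_spec β (not_le.1 hgt))
    rcases eq_or_lt_of_le hβle with rfl | hlt
    · exact (hWlt _ _).le
    · exact le_of_lt (lt_trans (hWlt β _) (zeta_mono hC hD hlt))
  -- closure of T f is inside S
  have hTS : ∀ f : SigmaOm, closure (T f) ⊆ S := by
    intro f z hz
    by_cases hzT : z ∈ T f
    · obtain ⟨β, -, rfl⟩ := hzT
      exact hWS β _
    have hcc := closure_char hz hzT
    have hzC : z ∈ closure C := by
      apply mem_closure_of_dense_below hcc.1
      intro y hy
      obtain ⟨t1, ht1T, ht1⟩ := hcc.2 y hy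
      obtain ⟨t2, ht2T, ht2⟩ := hcc.2 t1 ht1.2
      obtain ⟨β₁, hβ₁, hb1⟩ := ht1T
      obtain ⟨β₂, hβ₂, hb2⟩ := ht2T
      have hne : β₁ ≠ β₂ := by
        intro h
        rw [h, hb2] at hb1
        exact absurd hb1 (ne_of_gt ht2.1)
      rcases hne.lt_or_gt with hlt | hlt
      · -- separator for β₂
        have p2 := zeta_props hC hD β₂
        refine ⟨zetaC S C β₂, p2.1, ?_, ?_⟩
        · calc y < t1 := ht1.1
            _ < zeta S C β₁ := by rw [← hb1]; exact hWlt β₁ _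
            _ < zetaC S C β₂ := p2.2.2.1 β₁ hlt
        · calc zetaC S C β₂ ≤ sSup (C ∩ Set.Iio (zeta S C β₂)) :=
              le_cSup_CIio p2.1 p2.2.2.2.1
            _ < t2 := by rw [← hb2]; exact hWgt β₂ _
            _ < z := ht2.2
      · have p1 := zeta_props hC hD β₁
        refine ⟨zetaC S C β₁, p1.1, ?_, ?_⟩
        · calc y < t1 := ht1.1
            _ < t2 := ht2.1
            _ < zeta S C β₂ := by rw [← hb2]; exact hWlt β₂ _
            _ < zetaC S C β₁ := p1.2.2.1 β₂ hlt
        · calc zetaC S C β₁ ≤ sSup (C ∩ Set.Iio (zeta S C β₁)) :=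
              le_cSup_CIio p1.1 p1.2.2.2.1
            _ < t1 := by rw [← hb1]; exact hWgt β₁ _
            _ < z := ht1.2
    rw [hCcl.closure_eq] at hzC
    exact hCS hzC
  set g : SigmaOm → KS S := fun f =>
    ⟨closure (T f), hTS f,
      isCompact_of_isClosed_bdd isClosed_closure (b := zeta S C f.2.choose)
        (fun x hx => by
          have : closure (T f) ⊆ Set.Iic (zeta S C f.2.choose) :=
            closure_minimal (fun t ht => hTbd f t ht) isClosed_Iic
          exact this hx)⟩ with hg
  refine ⟨g, ?_⟩
  intro A ⟨Kb, hKb⟩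
  obtain ⟨b, hb⟩ := Kb.2.2.bddAbove
  have hbm : ∀ x ∈ Kb.1, x ≤ b := fun x hx => hb hx
  -- the trace sets are finite
  have hNfin : ∀ β : O1, {n : ℕ | W (zeta S C β) n ∈ Kb.1}.Finite := by
    intro β
    by_contra hinf
    have hzcl : zeta S C β ∈ closure Kb.1 := by
      apply mem_closure_of_dense_below ⟨zetaC S C β, (zeta_props hC hD β).2.2.2.1⟩
      intro y hy
      obtain ⟨n₀, hn₀⟩ := (hW _ (hzD β)).2.2.2.2 y hy
      have : ∃ n ∈ {n : ℕ | W (zeta S C β) n ∈ Kb.1}, n₀ ≤ n := by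
        by_contra hno
        push_neg at hno
        exact hinf (Set.Finite.subset (Set.finite_Iio n₀) (fun n hn => hno n hn))
      obtain ⟨n, hnK, hn⟩ := this
      exact ⟨W (zeta S C β) n, hnK,
        lt_of_lt_of_le hn₀ ((hW _ (hzD β)).1.monotone hn), hWlt β n⟩
    rw [Kb.2.2.isClosed.closure_eq] at hzcl
    exact (hzD β).2 (Kb.2.1 hzcl)
  refine ⟨⟨fun β => sSup {n : ℕ | W (zeta S C β) n ∈ Kb.1}, ⟨b, ?_⟩⟩, ?_⟩
  · intro β hβ
    have hemp : {n : ℕ | W (zeta S C β) n ∈ Kb.1} = ∅ := by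
      ext n
      simp only [Set.mem_setOf_eq, Set.mem_empty_iff_false, iff_false]
      intro hmem
      have h1 : W (zeta S C β) n ≤ b := hbm _ hmem
      have h2 : b < W (zeta S C β) n :=
        lt_trans (lt_trans hβ (zeta_cb_gt hC hD β)) (hWgt β n)
      exact absurd h1 (not_le.2 h2)
    show sSup {n : ℕ | W (zeta S C β) n ∈ Kb.1} = 0
    rw [hemp, csSup_empty]
    rfl
  · intro f hf
    apply (Sigma_le_iff _ _).2
    intro β
    by_cases h0 : f.1 β = 0
    · rw [h0]; exact Nat.zero_le _
    · have hmem : W (zeta S C β) (f.1 β) ∈ Kb.1 := by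
        apply hKb f hf
        exact subset_closure ⟨β, h0, rfl⟩
      exact le_csSup ((hNfin β).bddAbove) hmem

/-- Direction 2: a map KS S → SigmaOm under which bounded images pull back to bounded sets. -/
lemma dir2 {S C : Set O1} (hCS : C ⊆ S) (hCcl : IsClosed C) (hC : ¬ BddO1 C) :
    ∃ g : KS S → SigmaOm, ∀ B : Set (KS S),
      (∃ p, ∀ a ∈ B, g a ≤ p) → ∃ q, ∀ a ∈ B, a ≤ q := by
  classical
  -- injections of initial segments into ℕ
  have heex : ∀ δ : O1, ∃ eδ : O1 → ℕ, Set.InjOn eδ (Set.Iio δ) := by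
    intro δ
    haveI := (countable_Iio δ).to_subtype
    obtain ⟨f, hf⟩ := exists_injective_nat ↥(Set.Iio δ)
    refine ⟨fun x => if h : x < δ then f ⟨x, h⟩ else 0, ?_⟩
    intro x hx y hy hxy
    have hxy' : (if h : x < δ then f ⟨x, h⟩ else 0) = (if h : y < δ then f ⟨y, h⟩ else 0) := hxy
    rw [dif_pos (Set.mem_Iio.1 hx), dif_pos (Set.mem_Iio.1 hy)] at hxy'
    exact Subtype.mk_eq_mk.1 (hf hxy')
  choose e he using heex
  have hbddK : ∀ K : KS S, ∃ γ0 : O1, ∀ β : O1, γ0 < β →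
      ((if (β ∈ closure S \ S) ∧ (K.1 ∩ Set.Ioo (sSup (C ∩ Set.Iio β)) β).Nonempty then
        e β (sSup (K.1 ∩ Set.Iio β)) + 1 else 0) +
      (if K.1.Nonempty ∧ β = sSup K.1 then 1 else 0) = 0) := by
    intro K
    rcases K.1.eq_empty_or_nonempty with he' | hne
    · refine ⟨⊥, fun β hβ => ?_⟩
      have hA : ¬ ((β ∈ closure S \ S) ∧
          (K.1 ∩ Set.Ioo (sSup (C ∩ Set.Iio β)) β).Nonempty) := by
        rintro ⟨-, h2⟩; rw [he'] at h2; simp at h2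
      have hB : ¬ (K.1.Nonempty ∧ β = sSup K.1) := by
        rintro ⟨h2, -⟩; rw [he'] at h2; simp at h2
      rw [if_neg hA, if_neg hB]
    · obtain ⟨m, hm⟩ := K.2.2.exists_isGreatest hne
      have hsup : sSup K.1 = m := hm.csSup_eq
      have hcstar := nxt_spec hC m
      refine ⟨nxt C m, fun β hβ => ?_⟩
      have hA : ¬ ((β ∈ closure S \ S) ∧
          (K.1 ∩ Set.Ioo (sSup (C ∩ Set.Iio β)) β).Nonempty) := by
        rintro ⟨-, u, huK, hu⟩
        have h2 : nxt C m ≤ sSup (C ∩ Set.Iio β) := le_cSup_CIio hcstar.1 hβ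
        exact absurd (hm.2 huK) (not_le.2 (lt_trans (lt_of_lt_of_le hcstar.2 h2) hu.1))
      have hB : ¬ (K.1.Nonempty ∧ β = sSup K.1) := by
        rintro ⟨-, h2⟩
        rw [h2, hsup] at hβ
        exact absurd hβ (not_lt.2 hcstar.2.le)
      rw [if_neg hA, if_neg hB]
  set g : KS S → SigmaOm := fun K =>
    ⟨fun γ =>
      (if (γ ∈ closure S \ S) ∧ (K.1 ∩ Set.Ioo (sSup (C ∩ Set.Iio γ)) γ).Nonempty then
        e γ (sSup (K.1 ∩ Set.Iio γ)) + 1 else 0) +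
      (if K.1.Nonempty ∧ γ = sSup K.1 then 1 else 0), hbddK K⟩
    with hgdef
  have hgval : ∀ K : KS S, ∀ γ : O1, (g K).1 γ =
      (if (γ ∈ closure S \ S) ∧ (K.1 ∩ Set.Ioo (sSup (C ∩ Set.Iio γ)) γ).Nonempty then
        e γ (sSup (K.1 ∩ Set.Iio γ)) + 1 else 0) +
      (if K.1.Nonempty ∧ γ = sSup K.1 then 1 else 0) := fun K γ => rfl
  refine ⟨g, ?_⟩
  intro B ⟨h, hh⟩
  obtain ⟨γh, hγh⟩ := h.2
  -- every member of B is contained in Iic γh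
  have claim1 : ∀ K ∈ B, ∀ x ∈ K.1, x ≤ γh := by
    intro K hK x hx
    have hne : K.1.Nonempty := ⟨x, hx⟩
    have hval : 1 ≤ (g K).1 (sSup K.1) := by
      rw [hgval]
      have hmark : (if K.1.Nonempty ∧ sSup K.1 = sSup K.1 then 1 else 0) = 1 :=
        if_pos ⟨hne, rfl⟩
      rw [hmark]
      exact Nat.le_add_left 1 _
    have hle : (g K).1 (sSup K.1) ≤ h.1 (sSup K.1) := (hh K hK) (sSup K.1)
    have hsle : sSup K.1 ≤ γh := by
      by_contra hgt
      rw [hγh _ (not_le.1 hgt)] at hle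
      omega
    exact le_trans (le_csSup K.2.2.bddAbove hx) hsle
  set U : Set O1 := {x | ∃ K ∈ B, x ∈ K.1} with hU
  have hUS' : U ⊆ S := by rintro x ⟨K, -, hx⟩; exact K.2.1 hx
  have hUb : U ⊆ Set.Iic γh := by rintro x ⟨K, hK, hx⟩; exact claim1 K hK x hx
  have hclb : closure U ⊆ Set.Iic γh := closure_minimal hUb isClosed_Iic
  have hUS : closure U ⊆ S := by
    intro z hzcl
    by_contra hzS
    have hzD : z ∈ closure S \ S := ⟨closure_mono hUS' hzcl, hzS⟩
    have hzU : z ∉ U := fun h' => hzS (hUS' h')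
    obtain ⟨⟨y0, hy0⟩, dens⟩ := closure_char hzcl hzU
    have hcb := cb_lt hCS hCcl hzD
    set F : Set O1 := {x | x < z ∧ e z x ≤ h.1 z} with hF
    have hFfin : F.Finite := by
      apply Set.Finite.of_finite_image (f := e z)
      · exact (Set.finite_Iic (h.1 z)).subset (by rintro - ⟨x, hx, rfl⟩; exact hx.2)
      · exact (he z).mono (fun x hx => hx.1)
    have hFlt : sSup F < z := by
      rcases F.eq_empty_or_nonempty with hFe | hFne
      · rw [hFe, csSup_empty]
        exact lt_of_le_of_lt (bot_le (a := y0)) hy0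
      · exact (hFne.csSup_mem hFfin).1
    set ys := max (sSup (C ∩ Set.Iio z)) (sSup F) with hys
    obtain ⟨u, huU, hu⟩ := dens ys (max_lt hcb hFlt)
    obtain ⟨K, hK, huK⟩ := huU
    have hcond : (z ∈ closure S \ S) ∧
        (K.1 ∩ Set.Ioo (sSup (C ∩ Set.Iio z)) z).Nonempty :=
      ⟨hzD, u, huK, lt_of_le_of_lt (le_max_left _ _) hu.1, hu.2⟩
    set σ := sSup (K.1 ∩ Set.Iio z) with hσ
    have hKne : (K.1 ∩ Set.Iio z).Nonempty := ⟨u, huK, hu.2⟩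
    have hKbdd : BddAbove (K.1 ∩ Set.Iio z) := ⟨z, fun x hx => hx.2.le⟩
    have hσK : σ ∈ K.1 := by
      have h1 := csSup_mem_closure hKne hKbdd
      have h2 : closure (K.1 ∩ Set.Iio z) ⊆ K.1 :=
        closure_minimal Set.inter_subset_left K.2.2.isClosed
      exact h2 h1
    have hσlt : σ < z := by
      rcases lt_or_eq_of_le (csSup_le hKne (fun x hx => hx.2.le)) with h' | h'
      · exact h'
      · exact absurd (K.2.1 (h' ▸ hσK)) hzS
    have hσu : u ≤ σ := le_csSup hKbdd ⟨huK, hu.2⟩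
    have hval : (g K).1 z ≤ h.1 z := (hh K hK) z
    have hval2 : e z σ + 1 ≤ h.1 z := by
      rw [hgval, if_pos hcond, ← hσ] at hval
      omega
    have hσF : σ ∈ F := ⟨hσlt, Nat.le_of_succ_le hval2⟩
    have h5 : σ ≤ sSup F := le_csSup hFfin.bddAbove hσF
    have h6 : σ ≤ ys := le_trans h5 (le_max_right _ _)
    exact absurd (lt_of_lt_of_le hu.1 hσu) (not_lt.2 h6)
  refine ⟨⟨closure U, hUS, isCompact_of_isClosed_bdd isClosed_closure
    (b := γh) (fun x hx => hclb hx)⟩, ?_⟩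
  intro K hK
  apply (KS_le_iff _ _).2
  intro x hx
  have hxU : x ∈ U := ⟨K, hK, hx⟩
  exact subset_closure hxU

/-- From a map `g : Q → P` that pulls back bounded sets to bounded sets, we get a
Tukey quotient `P → Q`. -/
lemma tukeyGE_of_map {P : Type u} {Q : Type v} [PartialOrder P] [PartialOrder Q] [Nonempty Q]
    (g : Q → P) (hg : ∀ A : Set Q, (∃ p, ∀ a ∈ A, g a ≤ p) → ∃ q, ∀ a ∈ A, a ≤ q) :
    TukeyGE P Q := by
  classical
  refine ⟨fun p => if h : ∃ q, ∀ a ∈ {q' : Q | g q' ≤ p}, a ≤ q then h.choose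
    else Classical.arbitrary Q, ?_⟩
  intro Cs hCs q _
  obtain ⟨c, hcC, hgc⟩ := hCs (g q) trivial
  have hub : ∃ qq, ∀ a ∈ {q' : Q | g q' ≤ c}, a ≤ qq := hg _ ⟨c, fun a ha => ha⟩
  refine ⟨_, Set.mem_image_of_mem _ hcC, ?_⟩
  rw [dif_pos hub]
  exact hub.choose_spec q hgc

instance : Nonempty SigmaOm := ⟨⟨fun _ => 0, ⟨⊥, fun _ _ => rfl⟩⟩⟩
instance (S : Set O1) : Nonempty (KS S) := ⟨⟨∅, by simp, isCompact_empty⟩⟩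


/-- If `S ⊆ ω₁` is such that `cl(S) \ S` is unbounded in `ω₁` and `S` contains a cub set,
then `K(S)` is Tukey equivalent to `Σ(ω^{ω₁})`. -/
theorem statement15 (S : Set O1)
    (h1 : ¬ BddO1 (closure S \ S))
    (h2 : ∃ C : Set O1, C ⊆ S ∧ IsClosed C ∧ ¬ BddO1 C) :
    TukeyGE (KS S) SigmaOm ∧ TukeyGE SigmaOm (KS S) := by
  obtain ⟨C, hCS, hCcl, hC⟩ := h2
  obtain ⟨g1, hg1⟩ := dir1 hCS hCcl hC h1
  obtain ⟨g2, hg2⟩ := dir2 hCS hCcl hC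
  exact ⟨tukeyGE_of_map g1 hg1, tukeyGE_of_map g2 hg2⟩
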